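/- Let f, g ∈ 𝒢. The following are equivalent: (a) there exists an increasing function h : ℝ → ℝ with f = h ∘ g Lebesgue-almost everywhere on [0,1]; (b) there exists an increasing function h : ℝ → ℝ with f(0) = lim_{s↓0} (h∘g)(s) and f(p) = lim_{s↑p} (h∘g)(s) for every p ∈ (0,1]; (c) for all p, q ∈ [0,1] with p < q and g(p) = g(q), either f(p) = f(q), or p is a PSIL of g and g is constant on (p,q]; (d) there exists a set A ⊆ [0,1] of Lebesgue measure 1 such that for all p, q ∈ A, g(p) = g(q) implies f(p) = f(q). -/

import Mathlib

open MeasureTheory Filter Set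

section Defs

variable {Ω : Type*} [MeasurableSpace Ω]

/-- An atomless probability space: every event can be split to achieve any smaller measure
(Sierpiński's property, equivalent to atomlessness for probability measures). -/
def Atomless (P : Measure Ω) : Prop :=
  ∀ A : Set Ω, MeasurableSet A → ∀ r : ENNReal, r ≤ P A →
    ∃ B : Set Ω, B ⊆ A ∧ MeasurableSet B ∧ P B = r

/-- `A` is a tail event for `X`: outside a null set, `X ω ≥ X ω'` for `ω ∈ A`, `ω' ∈ Aᶜ`. -/
def IsTailEvent (P : Measure Ω) (X : Ω → ℝ) (A : Set Ω) : Prop :=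
  MeasurableSet A ∧ ∃ N : Set Ω, P N = 0 ∧
    ∀ ω ∈ A, ω ∉ N → ∀ ω' ∈ Aᶜ, ω' ∉ N → X ω' ≤ X ω

/-- `A` is a `p`-tail event for `X`: a tail event with `P A = 1 - p`. -/
def IsPTailEvent (P : Measure Ω) (X : Ω → ℝ) (p : ℝ) (A : Set Ω) : Prop :=
  IsTailEvent P X A ∧ P A = ENNReal.ofReal (1 - p)

/-- A random vector is `p`-concentrated if a single event is a `p`-tail event for every
component. -/
def PConcentrated (P : Measure Ω) {d : ℕ} (X : Fin d → Ω → ℝ) (p : ℝ) : Prop :=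
  ∃ A : Set Ω, ∀ i, IsPTailEvent P (X i) p A

/-- A random vector is `K`-concentrated if it is `p`-concentrated for every `p ∈ K`. -/
def KConcentrated (P : Measure Ω) {d : ℕ} (X : Fin d → Ω → ℝ) (K : Set ℝ) : Prop :=
  ∀ p ∈ K, PConcentrated P X p

/-- Left quantile function `Q_X⁻(p) = inf {x | ℙ(X ≤ x) ≥ p}` (also `VaR_p`). -/
noncomputable def leftQuantile (P : Measure Ω) (X : Ω → ℝ) (p : ℝ) : ℝ :=
  sInf {x : ℝ | ENNReal.ofReal p ≤ P {ω | X ω ≤ x}}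

/-- Right quantile function `Q_X⁺(p) = inf {x | ℙ(X ≤ x) > p}` (also `VaR⁺_p`). -/
noncomputable def rightQuantile (P : Measure Ω) (X : Ω → ℝ) (p : ℝ) : ℝ :=
  sInf {x : ℝ | ENNReal.ofReal p < P {ω | X ω ≤ x}}

/-- `Q_X : [0,1] → ℝ`, equal to `Q_X⁺` at `0` and to `Q_X⁻` on `(0,1]`. -/
noncomputable def Q (P : Measure Ω) (X : Ω → ℝ) (p : ℝ) : ℝ :=
  if p = 0 then rightQuantile P X 0 else leftQuantile P X p

/-- Membership in L∞: essentially bounded (and measurable) random variables. -/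
def MemLinf (P : Measure Ω) (X : Ω → ℝ) : Prop :=
  Measurable X ∧ ∃ C : ℝ, ∀ᵐ ω ∂P, |X ω| ≤ C

/-- A functional `ρ` on L∞ is `K`-additive if it is additive on every `K`-concentrated
random vector (of dimension `d ≥ 2`) with essentially bounded components. -/
def KAdditive (P : Measure Ω) (K : Set ℝ) (ρ : (Ω → ℝ) → ℝ) : Prop :=
  ∀ d : ℕ, 2 ≤ d → ∀ X : Fin d → Ω → ℝ, (∀ i, MemLinf P (X i)) →
    KConcentrated P X K → ρ (∑ i, X i) = ∑ i, ρ (X i)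

/-- A pair of random variables is comonotonic. -/
def ComonotonePair (P : Measure Ω) (X Z : Ω → ℝ) : Prop :=
  ∀ᵐ w ∂(P.prod P), 0 ≤ (X w.1 - X w.2) * (Z w.1 - Z w.2)

/-- A random vector is `g`-comonotonic: some random variable `Z` with quantile function `g`
on `[0,1]` is comonotonic with every component. -/
def GComonotone (P : Measure Ω) {d : ℕ} (g : ℝ → ℝ) (X : Fin d → Ω → ℝ) : Prop :=
  ∃ Z : Ω → ℝ, Measurable Z ∧ (∀ p ∈ Icc (0:ℝ) 1, Q P Z p = g p) ∧
    ∀ i, ComonotonePair P (X i) Z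

/-- A functional `ρ` on L∞ is `g`-additive if it is additive on every `g`-comonotonic
random vector (of dimension `d ≥ 2`) with essentially bounded components. -/
def GAdditive (P : Measure Ω) (g : ℝ → ℝ) (ρ : (Ω → ℝ) → ℝ) : Prop :=
  ∀ d : ℕ, 2 ≤ d → ∀ X : Fin d → Ω → ℝ, (∀ i, MemLinf P (X i)) →
    GComonotone P g X → ρ (∑ i, X i) = ∑ i, ρ (X i)

/-- The distortion riskmetric `I_h`. -/
noncomputable def distortionRM (P : Measure Ω) (h : ℝ → ℝ) (X : Ω → ℝ) : ℝ :=
  (∫ x in Iio (0:ℝ), (h ((P {ω | x < X ω}).toReal) - h 1)) +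
    ∫ x in Ioi (0:ℝ), h ((P {ω | x < X ω}).toReal)

/-- The spectral risk measure `ρ_g(X) = ∫₀¹ g(t) Q_X(t) dt`. -/
noncomputable def specRM (P : Measure Ω) (g : ℝ → ℝ) (X : Ω → ℝ) : ℝ :=
  ∫ t in (0:ℝ)..1, g t * Q P X t

/-- Expected Shortfall at level `p`. -/
noncomputable def ES (P : Measure Ω) (p : ℝ) (X : Ω → ℝ) : ℝ :=
  (1 - p)⁻¹ * ∫ q in p..1, leftQuantile P X q

end Defs

/-- The class 𝒢 of increasing functions on `[0,1]`, right-continuous at `0` and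
left-continuous on `(0,1]`. -/
def MemG (g : ℝ → ℝ) : Prop :=
  MonotoneOn g (Icc 0 1) ∧
    Tendsto g (nhdsWithin 0 (Ioi 0)) (nhds (g 0)) ∧
    ∀ p ∈ Ioc (0:ℝ) 1, Tendsto g (nhdsWithin p (Iio p)) (nhds (g p))

/-- `p` is a point of strict increase on the right of `g`. -/
def IsPSIR (g : ℝ → ℝ) (p : ℝ) : Prop :=
  p ∈ Ico (0:ℝ) 1 ∧ ∀ s ∈ Ioc p 1, g p < g s

/-- `p` is a point of strict increase on the left of `g`. -/
def IsPSIL (g : ℝ → ℝ) (p : ℝ) : Prop :=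
  p ∈ Ioc (0:ℝ) 1 ∧ ∀ s ∈ Ico (0:ℝ) p, g s < g p

/-- The set of points of strict increase of `g`. -/
def PSI (g : ℝ → ℝ) : Set ℝ :=
  {p | IsPSIR g p ∨ IsPSIL g p}

/-- `f ≾ g`: there is an increasing `h` with `f = h ∘ g` a.e. on `[0,1]`. -/
def Prec (f g : ℝ → ℝ) : Prop :=
  ∃ h : ℝ → ℝ, Monotone h ∧
    ∀ᵐ t ∂(volume.restrict (Icc (0:ℝ) 1)), f t = h (g t)

/-- The map `𝒱 : K ↦ (p ↦ sup ((0,p) ∩ K))` (with `sup ∅ = 0`, the junk value of `sSup` in `ℝ`). -/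
noncomputable def VK (K : Set ℝ) (p : ℝ) : ℝ :=
  sSup (Ioo (0:ℝ) p ∩ K)

/-- A risk spectrum: a nonnegative element of 𝒢 integrating to 1. -/
def IsRiskSpectrum (g : ℝ → ℝ) : Prop :=
  MemG g ∧ (∀ t ∈ Icc (0:ℝ) 1, 0 ≤ g t) ∧ (∫ t in (0:ℝ)..1, g t) = 1

lemma dense_aux {A : Set ℝ} (hA1 : A ⊆ Icc 0 1) (hA2 : volume A = 1)
    {a b : ℝ} (ha : 0 ≤ a) (hb : b ≤ 1) (hab : a < b) : (A ∩ Ioo a b).Nonempty := by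
  by_contra hcon
  rw [Set.not_nonempty_iff_eq_empty] at hcon
  have hsub : A ⊆ Icc 0 a ∪ Icc b 1 := by
    intro t ht
    have ht1 := hA1 ht
    have htn : t ∉ Ioo a b := fun hmem => (Set.eq_empty_iff_forall_notMem.mp hcon t) ⟨ht, hmem⟩
    rcases le_or_gt t a with h | h
    · exact Or.inl ⟨ht1.1, h⟩
    · exact Or.inr ⟨not_lt.mp (fun h2 => htn ⟨h, h2⟩), ht1.2⟩
  have hle : volume A ≤ ENNReal.ofReal (a + (1 - b)) := by
    calc volume A ≤ volume (Icc 0 a ∪ Icc b 1) := measure_mono hsub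
    _ ≤ volume (Icc (0:ℝ) a) + volume (Icc b 1) := measure_union_le _ _
    _ = ENNReal.ofReal a + ENNReal.ofReal (1 - b) := by rw [Real.volume_Icc, Real.volume_Icc, sub_zero]
    _ = ENNReal.ofReal (a + (1 - b)) := (ENNReal.ofReal_add ha (by linarith)).symm
  rw [hA2] at hle
  have : ENNReal.ofReal (a + (1 - b)) < 1 := by
    rw [show (1:ENNReal) = ENNReal.ofReal 1 by simp]
    exact ENNReal.ofReal_lt_ofReal_iff_of_nonneg (by linarith) |>.mpr (by linarith)
  exact absurd (lt_of_le_of_lt hle this) (lt_irrefl _)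

lemma squeezeLeft {f g h : ℝ → ℝ} (hfm : MonotoneOn f (Icc 0 1)) (hgm : MonotoneOn g (Icc 0 1))
    (hh : Monotone h) {A : Set ℝ} (hA1 : A ⊆ Icc 0 1)
    (hdense : ∀ a b : ℝ, 0 ≤ a → b ≤ 1 → a < b → (A ∩ Ioo a b).Nonempty)
    (heq : ∀ t ∈ A, f t = h (g t)) {p : ℝ} (hp : p ∈ Ioc (0:ℝ) 1)
    (hfl : Tendsto f (nhdsWithin p (Iio p)) (nhds (f p))) :
    Tendsto (fun s => h (g s)) (nhdsWithin p (Iio p)) (nhds (f p)) := by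
  rw [Metric.tendsto_nhdsWithin_nhds] at hfl ⊢
  intro ε hε
  obtain ⟨δ₁, hδ₁, hδ⟩ := hfl ε hε
  set a := max 0 (p - δ₁) with ha
  have hap : a < p := max_lt hp.1 (by linarith)
  obtain ⟨t, htA, hta, htp⟩ := hdense a p (le_max_left _ _) hp.2 hap
  have ht01 := hA1 htA
  refine ⟨p - t, by linarith, ?_⟩
  intro s hs hsd
  have hts : t < s := by
    rw [Real.dist_eq, abs_of_nonpos (by simp only [mem_Iio] at hs; linarith)] at hsd
    simp only [mem_Iio] at hs; linarith
  have hs01 : s ∈ Icc (0:ℝ) 1 := ⟨le_trans ht01.1 hts.le, le_trans (mem_Iio.mp hs).le hp.2⟩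
  -- lower bound : f p - ε < f t ≤ h (g s)
  have htd : dist t p < δ₁ := by
    rw [Real.dist_eq, abs_of_nonpos (by linarith)]
    have : p - δ₁ ≤ a := le_max_right _ _
    linarith
  have hft : dist (f t) (f p) < ε := hδ (mem_Iio.mpr htp) htd
  have hlow : f p - ε < h (g s) := by
    have h1 : h (g t) ≤ h (g s) := hh (hgm ht01 hs01 hts.le)
    rw [Real.dist_eq, abs_lt] at hft
    rw [← heq t htA] at h1
    linarith
  -- upper bound : h (g s) ≤ f p
  obtain ⟨b, hbA, hbs, hbp⟩ := hdense s p hs01.1 hp.2 (mem_Iio.mp hs)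
  have hb01 := hA1 hbA
  have hup : h (g s) ≤ f p := by
    have h1 : h (g s) ≤ h (g b) := hh (hgm hs01 hb01 hbs.le)
    have h2 : f b ≤ f p := hfm hb01 ⟨hp.1.le, hp.2⟩ hbp.le
    rw [← heq b hbA] at h1
    linarith
  rw [Real.dist_eq, abs_lt]
  constructor <;> linarith

lemma squeezeRight {f g h : ℝ → ℝ} (hfm : MonotoneOn f (Icc 0 1)) (hgm : MonotoneOn g (Icc 0 1))
    (hh : Monotone h) {A : Set ℝ} (hA1 : A ⊆ Icc 0 1)
    (hdense : ∀ a b : ℝ, 0 ≤ a → b ≤ 1 → a < b → (A ∩ Ioo a b).Nonempty)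
    (heq : ∀ t ∈ A, f t = h (g t))
    (hfr : Tendsto f (nhdsWithin 0 (Ioi 0)) (nhds (f 0))) :
    Tendsto (fun s => h (g s)) (nhdsWithin 0 (Ioi 0)) (nhds (f 0)) := by
  rw [Metric.tendsto_nhdsWithin_nhds] at hfr ⊢
  intro ε hε
  obtain ⟨δ₁, hδ₁, hδ⟩ := hfr ε hε
  obtain ⟨t, htA, hta, htb⟩ := hdense 0 (min δ₁ 1) le_rfl (min_le_right _ _) (lt_min hδ₁ one_pos)
  have ht01 := hA1 htA
  refine ⟨t, hta, ?_⟩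
  intro s hs hsd
  have hs0 : 0 < s := mem_Ioi.mp hs
  have hst : s < t := by rwa [Real.dist_eq, sub_zero, abs_of_pos hs0] at hsd
  have hs01 : s ∈ Icc (0:ℝ) 1 := ⟨hs0.le, le_trans hst.le ht01.2⟩
  have hftd : dist (f t) (f 0) < ε := by
    refine hδ (mem_Ioi.mpr hta) ?_
    rw [Real.dist_eq, sub_zero, abs_of_pos hta]
    exact lt_of_lt_of_le htb (min_le_left _ _)
  obtain ⟨b, hbA, hb0, hbs⟩ := hdense 0 s le_rfl hs01.2 hs0
  have hb01 := hA1 hbA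
  have hlow : f 0 ≤ h (g s) := by
    have h1 : h (g b) ≤ h (g s) := hh (hgm hb01 hs01 hbs.le)
    have h2 : f 0 ≤ f b := hfm ⟨le_rfl, zero_le_one⟩ hb01 hb01.1
    rw [← heq b hbA] at h1
    linarith
  have hup : h (g s) < f 0 + ε := by
    have h1 : h (g s) ≤ h (g t) := hh (hgm hs01 ht01 hst.le)
    rw [← heq t htA] at h1
    rw [Real.dist_eq, abs_lt] at hftd
    linarith
  rw [Real.dist_eq, abs_lt]
  constructor <;> linarith

/-- For `f, g ∈ 𝒢`, the four characterizations of `f ≾ g` are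
equivalent. -/
theorem stmt_5 (f g : ℝ → ℝ) (hf : MemG f) (hg : MemG g) :
    List.TFAE [
      (∃ h : ℝ → ℝ, Monotone h ∧
        ∀ᵐ t ∂(MeasureTheory.volume.restrict (Icc (0:ℝ) 1)), f t = h (g t)),
      (∃ h : ℝ → ℝ, Monotone h ∧
        Filter.Tendsto (fun s => h (g s)) (nhdsWithin 0 (Ioi 0)) (nhds (f 0)) ∧
        ∀ p ∈ Ioc (0:ℝ) 1,
          Filter.Tendsto (fun s => h (g s)) (nhdsWithin p (Iio p)) (nhds (f p))),
      (∀ p ∈ Icc (0:ℝ) 1, ∀ q ∈ Icc (0:ℝ) 1, p < q → g p = g q →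
        f p = f q ∨ (IsPSIL g p ∧ ∀ t ∈ Ioc p q, g t = g p)),
      (∃ A : Set ℝ, A ⊆ Icc (0:ℝ) 1 ∧ MeasureTheory.volume A = 1 ∧
        ∀ p ∈ A, ∀ q ∈ A, g p = g q → f p = f q)
    ] := by
  obtain ⟨hfm, hf0, hfL⟩ := hf
  obtain ⟨hgm, hg0, hgL⟩ := hg
  tfae_have 1 → 4 := by
    rintro ⟨h, hh, hae⟩
    rw [ae_iff] at hae
    rw [Measure.restrict_apply' measurableSet_Icc] at hae
    refine ⟨Icc 0 1 \ ({a | ¬f a = h (g a)} ∩ Icc 0 1), diff_subset, ?_, ?_⟩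
    · rw [measure_diff_null hae, Real.volume_Icc]; norm_num
    · rintro p ⟨hp1, hp2⟩ q ⟨hq1, hq2⟩ hgpq
      have h1 : f p = h (g p) := by
        by_contra hc; exact hp2 ⟨hc, hp1⟩
      have h2 : f q = h (g q) := by
        by_contra hc; exact hq2 ⟨hc, hq1⟩
      rw [h1, h2, hgpq]
  tfae_have 4 → 2 := by
    rintro ⟨A, hA1, hA2, hAkey⟩
    have hdense : ∀ a b : ℝ, 0 ≤ a → b ≤ 1 → a < b → (A ∩ Ioo a b).Nonempty :=
      fun a b ha hb hab => dense_aux hA1 hA2 ha hb hab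
    set h : ℝ → ℝ := fun x => sSup (insert (f 0) (f '' (A ∩ {t | g t ≤ x}))) with hdef
    have hbdd : ∀ x, BddAbove (insert (f 0) (f '' (A ∩ {t | g t ≤ x}))) := by
      intro x
      refine ⟨max (f 0) (f 1), ?_⟩
      rintro y (rfl | ⟨t, ⟨htA, -⟩, rfl⟩)
      · exact le_max_left _ _
      · exact le_trans (hfm (hA1 htA) ⟨zero_le_one, le_rfl⟩ (hA1 htA).2) (le_max_right _ _)
    have hhm : Monotone h := by
      intro x y hxy
      refine csSup_le_csSup (hbdd y) ⟨f 0, mem_insert _ _⟩ ?_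
      apply insert_subset_insert
      exact image_mono (inter_subset_inter_right _ (fun t ht => le_trans ht hxy))
    have heq : ∀ t ∈ A, f t = h (g t) := by
      intro t ht
      have ht01 := hA1 ht
      refine le_antisymm ?_ ?_
      · exact le_csSup (hbdd _) (mem_insert_of_mem _ ⟨t, ⟨ht, mem_setOf.mpr le_rfl⟩, rfl⟩)
      · refine csSup_le ⟨f 0, mem_insert _ _⟩ ?_
        rintro y (rfl | ⟨s, ⟨hsA, hs2⟩, rfl⟩)
        · exact hfm ⟨le_rfl, zero_le_one⟩ ht01 ht01.1
        · have hs01 := hA1 hsA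
          rcases eq_or_lt_of_le (mem_setOf.mp hs2 : g s ≤ g t) with hgeq | hglt
          · exact le_of_eq (hAkey s hsA t ht hgeq)
          · have hst : s < t := by
              by_contra hc
              exact absurd (hgm ht01 hs01 (not_lt.mp hc)) (not_le.mpr hglt)
            exact hfm hs01 ht01 hst.le
    exact ⟨h, hhm, squeezeRight hfm hgm hhm hA1 hdense heq hf0,
      fun p hp => squeezeLeft hfm hgm hhm hA1 hdense heq hp (hfL p hp)⟩
  tfae_have 2 → 3 := by
    rintro ⟨h, hh, h₀, hL⟩
    intro p hp q hq hpq hgpq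
    have hconst : ∀ t ∈ Icc p q, g t = g p := by
      intro t ht
      have ht01 : t ∈ Icc (0:ℝ) 1 := ⟨le_trans hp.1 ht.1, le_trans ht.2 hq.2⟩
      refine le_antisymm ?_ (hgm hp ht01 ht.1)
      rw [hgpq]
      exact hgm ht01 hq ht.2
    by_cases hpsil : IsPSIL g p
    · exact Or.inr ⟨hpsil, fun t ht => hconst t ⟨ht.1.le, ht.2⟩⟩
    · left
      have hq0 : 0 < q := lt_of_le_of_lt hp.1 hpq
      have hfq : f q = h (g p) := by
        refine tendsto_nhds_unique (Tendsto.congr' ?_ (hL q ⟨hq0, hq.2⟩)) tendsto_const_nhds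
        filter_upwards [Ioo_mem_nhdsLT_of_mem (⟨hpq, le_rfl⟩ : q ∈ Ioc p q)] with s hs
        rw [hconst s ⟨hs.1.le, hs.2.le⟩]
      have hfp : f p = h (g p) := by
        rcases eq_or_lt_of_le hp.1 with hp0 | hp0
        · subst hp0
          refine tendsto_nhds_unique (Tendsto.congr' ?_ h₀) tendsto_const_nhds
          filter_upwards [Ioo_mem_nhdsGT_of_mem (⟨le_rfl, hq0⟩ : (0:ℝ) ∈ Ico 0 q)] with s hs
          rw [hconst s ⟨hs.1.le, hs.2.le⟩]
        · have : ∃ s₀ ∈ Ico (0:ℝ) p, g p ≤ g s₀ := by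
            by_contra hc
            push_neg at hc
            exact hpsil ⟨⟨hp0, hp.2⟩, fun s hs => hc s hs⟩
          obtain ⟨s₀, hs₀, hgs₀⟩ := this
          have hs₀01 : s₀ ∈ Icc (0:ℝ) 1 := ⟨hs₀.1, le_trans hs₀.2.le hp.2⟩
          have hgs₀eq : g s₀ = g p := le_antisymm (hgm hs₀01 hp hs₀.2.le) hgs₀
          refine tendsto_nhds_unique (Tendsto.congr' ?_ (hL p ⟨hp0, hp.2⟩)) tendsto_const_nhds
          filter_upwards [Ioo_mem_nhdsLT_of_mem (⟨hs₀.2, le_rfl⟩ : p ∈ Ioc s₀ p)] with s hs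
          have hs01 : s ∈ Icc (0:ℝ) 1 := ⟨le_trans hs₀.1 hs.1.le, le_trans hs.2.le hp.2⟩
          have : g s ≤ g p := hgm hs01 hp hs.2.le
          have : g p ≤ g s := by rw [← hgs₀eq]; exact hgm hs₀01 hs01 hs.1.le
          rw [le_antisymm ‹g s ≤ g p› this]
      rw [hfp, hfq]
  tfae_have 3 → 4 := by
    intro h3
    set E : ℚ → Set ℝ := fun r =>
      {p | IsPSIL g p ∧ p < r ∧ ∃ q ∈ Icc (0:ℝ) 1, (r:ℝ) < q ∧ g q = g p} with hE
    have hkey : ∀ r : ℚ, ∀ p ∈ E r, ∀ p' ∈ E r, p < p' → False := by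
      intro r p hp p' hp' hlt
      obtain ⟨hpsil, hpr, q, hq01, hrq, hgq⟩ := hp
      obtain ⟨hpsil', hpr', -⟩ := hp'
      have hp01 : p ∈ Icc (0:ℝ) 1 := ⟨hpsil.1.1.le, hpsil.1.2⟩
      have hp'01 : p' ∈ Icc (0:ℝ) 1 := ⟨hpsil'.1.1.le, hpsil'.1.2⟩
      have hp'q : p' < q := lt_trans hpr' hrq
      have h1 : g p' ≤ g p := by
        rw [← hgq]; exact hgm hp'01 hq01 hp'q.le
      have h2 : g p < g p' := hpsil'.2 p ⟨hp01.1, hlt⟩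
      exact absurd h1 (not_le.mpr h2)
    have hsub : ∀ r : ℚ, (E r).Subsingleton := by
      intro r p hp p' hp'
      rcases lt_trichotomy p p' with h | h | h
      · exact absurd (hkey r p hp p' hp' h) not_false
      · exact h
      · exact absurd (hkey r p' hp' p hp h) not_false
    have hDc : (⋃ r : ℚ, E r).Countable :=
      countable_iUnion fun r => (hsub r).countable
    refine ⟨Icc 0 1 \ ⋃ r : ℚ, E r, diff_subset, ?_, ?_⟩
    · rw [measure_diff_null (hDc.measure_zero volume), Real.volume_Icc]; norm_num
    · have main : ∀ p ∈ Icc 0 1 \ ⋃ r : ℚ, E r, ∀ q ∈ Icc 0 1 \ ⋃ r : ℚ, E r,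
          p < q → g p = g q → f p = f q := by
        rintro p ⟨hp01, hpE⟩ q ⟨hq01, -⟩ hlt hgpq
        rcases h3 p hp01 q hq01 hlt hgpq with hdone | ⟨hpsil, -⟩
        · exact hdone
        · exfalso
          obtain ⟨r, hr1, hr2⟩ := exists_rat_btwn hlt
          exact hpE (mem_iUnion.mpr ⟨r, hpsil, hr1, q, hq01, hr2, hgpq.symm⟩)
      rintro p hp q hq hgpq
      rcases lt_trichotomy p q with h | h | h
      · exact main p hp q hq h hgpq
      · rw [h]
      · exact (main q hq p hp h hgpq.symm).symm
  tfae_have 2 → 1 := by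
    rintro ⟨h, hh, h₀, hL⟩
    have hub : ∀ p ∈ Ioc (0:ℝ) 1, f p ≤ h (g p) := by
      intro p hp
      refine le_of_tendsto (hL p hp) ?_
      filter_upwards [Ioo_mem_nhdsLT_of_mem (⟨hp.1, le_rfl⟩ : p ∈ Ioc 0 p)] with s hs
      exact hh (hgm ⟨hs.1.le, le_trans hs.2.le hp.2⟩ ⟨hp.1.le, hp.2⟩ hs.2.le)
    have hlb : ∀ p ∈ Ioc (0:ℝ) 1, ∀ p' ∈ Ioc (0:ℝ) 1, p < p' → h (g p) ≤ f p' := by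
      intro p hp p' hp' hlt
      refine ge_of_tendsto (hL p' hp') ?_
      filter_upwards [Ioo_mem_nhdsLT_of_mem (⟨hlt, le_rfl⟩ : p' ∈ Ioc p p')] with s hs
      exact hh (hgm ⟨hp.1.le, hp.2⟩ ⟨le_trans hp.1.le hs.1.le, le_trans hs.2.le hp'.2⟩ hs.1.le)
    set B : ℚ → Set ℝ := fun r => {p | p ∈ Ioc (0:ℝ) 1 ∧ f p < r ∧ (r:ℝ) < h (g p)} with hB
    have hBsub : ∀ r : ℚ, (B r).Subsingleton := by
      have hkey : ∀ r : ℚ, ∀ p ∈ B r, ∀ p' ∈ B r, p < p' → False := by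
        rintro r p ⟨hp, hp1, hp2⟩ p' ⟨hp', hp'1, hp'2⟩ hlt
        have := hlb p hp p' hp' hlt
        linarith
      intro r p hp p' hp'
      rcases lt_trichotomy p p' with h | h | h
      · exact absurd (hkey r p hp p' hp' h) not_false
      · exact h
      · exact absurd (hkey r p' hp' p hp h) not_false
    refine ⟨h, hh, ?_⟩
    rw [ae_iff, Measure.restrict_apply' measurableSet_Icc]
    refine measure_mono_null ?_
      (Set.Countable.measure_zero (Set.Countable.insert 0
        (countable_iUnion fun r => (hBsub r).countable)) volume)
    rintro t ⟨htne, ht01⟩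
    rcases eq_or_lt_of_le ht01.1 with ht0 | ht0
    · exact Or.inl ht0.symm
    · refine Or.inr (mem_iUnion.mpr ?_)
      have hlt : f t < h (g t) := lt_of_le_of_ne (hub t ⟨ht0, ht01.2⟩) htne
      obtain ⟨r, hr1, hr2⟩ := exists_rat_btwn hlt
      exact ⟨r, ⟨ht0, ht01.2⟩, hr1, hr2⟩
  tfae_finish
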